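/- arXiv:2411.13820 — 2 statements merged into one kernel-verified Lean document; each statement's English description precedes it below -/
import Mathlib

section
/- For L = 2 and x ≥ 1, the number of pairs (i_1, i_2) of positive integers with i_1·i_2 ≤ x equals ∑_{i=1}^{⌊x⌋} ⌊x/i⌋, and satisfies |∑_{i=1}^{⌊x⌋} ⌊x/i⌋ − x ln x − (2γ − 1)x| = O(√x), where γ is the Euler–Mascheroni constant. In particular it is asymptotic to x ln x. -/
open Finset Filter

lemma fiber_eq (y : ℝ) (hy : 0 ≤ y) (i : ℕ) (hi : 0 < i) :
    (Finset.Icc 1 ⌊y⌋₊).filter (fun j => ((i*j : ℕ) : ℝ) ≤ y) = Finset.Icc 1 ⌊y / (i:ℝ)⌋₊ := by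
  have hi' : (0:ℝ) < i := by exact_mod_cast hi
  ext j
  simp only [mem_filter, Finset.mem_Icc]
  constructor
  · rintro ⟨⟨h1, _⟩, h3⟩
    refine ⟨h1, Nat.le_floor ?_⟩
    rw [le_div_iff₀ hi']
    push_cast at h3 ⊢
    linarith [h3]
  · rintro ⟨h1, h2⟩
    have hj : (j : ℝ) ≤ y / i := (Nat.le_floor_iff (by positivity)).mp h2
    have hij : ((i*j : ℕ) : ℝ) ≤ y := by
      push_cast
      have := (le_div_iff₀ hi').mp hj
      linarith [this]
    refine ⟨⟨h1, Nat.le_floor ?_⟩, hij⟩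
    push_cast at hij ⊢
    have h1' : (1:ℝ) ≤ j := by exact_mod_cast h1
    have hi1' : (1:ℝ) ≤ i := by exact_mod_cast hi
    nlinarith [hij, h1', hi1']

lemma hyper_count (y : ℝ) (hy : 0 ≤ y) (M : ℕ) :
    ((Finset.Icc 1 M ×ˢ Finset.Icc 1 ⌊y⌋₊).filter
      (fun p : ℕ × ℕ => ((p.1 * p.2 : ℕ) : ℝ) ≤ y)).card = ∑ i ∈ Finset.Icc 1 M, ⌊y / (i:ℝ)⌋₊ := by
  rw [Finset.card_eq_sum_card_fiberwise (f := fun p : ℕ × ℕ => p.1) (t := Finset.Icc 1 M)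
    (fun p hp => (mem_filter.mp hp).1 |> fun h => (Finset.mem_product.mp h).1)]
  refine Finset.sum_congr rfl fun i hi => ?_
  have hi1 : 0 < i := (Finset.mem_Icc.mp hi).1
  have : ((filter (fun p : ℕ × ℕ => p.1 = i)
      (filter (fun p : ℕ × ℕ => ((p.1 * p.2 : ℕ):ℝ) ≤ y) (Finset.Icc 1 M ×ˢ Finset.Icc 1 ⌊y⌋₊)))).card
      = ((Finset.Icc 1 ⌊y⌋₊).filter (fun j => ((i*j : ℕ) : ℝ) ≤ y)).card := by
    refine Finset.card_bij' (fun p _ => p.2) (fun j _ => (i, j)) ?_ ?_ ?_ ?_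
    · rintro p hp
      simp only [mem_filter, Finset.mem_product] at hp ⊢
      obtain ⟨⟨⟨_, h2⟩, h3⟩, h4⟩ := hp
      exact ⟨h2, h4 ▸ h3⟩
    · rintro j hj
      simp only [mem_filter, Finset.mem_product] at hj ⊢
      exact ⟨⟨⟨hi, hj.1⟩, hj.2⟩, trivial⟩
    · rintro p hp
      simp only [mem_filter] at hp
      exact Prod.ext hp.2.symm rfl
    · rintro j _; rfl
  rw [this, fiber_eq y hy i hi1, Nat.card_Icc]
  simp

lemma hyperbola (y : ℝ) (hy : 1 ≤ y) :
    (∑ i ∈ Finset.Icc 1 ⌊y⌋₊, ⌊y / (i:ℝ)⌋₊) + ⌊Real.sqrt y⌋₊ * ⌊Real.sqrt y⌋₊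
      = 2 * ∑ i ∈ Finset.Icc 1 ⌊Real.sqrt y⌋₊, ⌊y / (i:ℝ)⌋₊ := by
  have hy0 : (0:ℝ) ≤ y := by linarith
  set s := Real.sqrt y with hs
  set K := ⌊s⌋₊ with hKdef
  set N := ⌊y⌋₊ with hNdef
  have hs1 : 1 ≤ s := by rw [hs, show (1:ℝ) = Real.sqrt 1 by simp]; exact Real.sqrt_le_sqrt hy
  have hsy : s ≤ y := by
    nlinarith [Real.mul_self_sqrt hy0, Real.sqrt_nonneg y, hy, (by rw [hs, show (1:ℝ) = Real.sqrt 1 by simp]; exact Real.sqrt_le_sqrt hy : (1:ℝ) ≤ s)]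
  have hKN : K ≤ N := Nat.floor_le_floor hsy
  have hKs : (K:ℝ) ≤ s := Nat.floor_le (by linarith)
  have hsK1 : s < K + 1 := Nat.lt_floor_add_one s
  have hss : s * s = y := Real.mul_self_sqrt hy0
  set F := ((Finset.Icc 1 N ×ˢ Finset.Icc 1 N).filter
      (fun p : ℕ × ℕ => ((p.1 * p.2 : ℕ) : ℝ) ≤ y)) with hF
  set A := F.filter (fun p : ℕ × ℕ => p.1 ≤ K) with hA
  set B := F.filter (fun p : ℕ × ℕ => p.2 ≤ K) with hB
  have hUnion : A ∪ B = F := by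
    apply Finset.Subset.antisymm
    · exact Finset.union_subset (Finset.filter_subset _ _) (Finset.filter_subset _ _)
    · intro p hp
      by_cases hc : p.1 ≤ K
      · exact Finset.mem_union_left _ (Finset.mem_filter.mpr ⟨hp, hc⟩)
      refine Finset.mem_union_right _ (Finset.mem_filter.mpr ⟨hp, ?_⟩)
      by_contra hc2
      push_neg at hc hc2
      have hp1 : K + 1 ≤ p.1 := hc
      have hp2 : K + 1 ≤ p.2 := hc2
      have hple : ((p.1 * p.2 : ℕ) : ℝ) ≤ y := by
        have h := hp; rw [hF, Finset.mem_filter] at h; exact h.2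
      have c1 : s < (p.1 : ℝ) := lt_of_lt_of_le hsK1 (by exact_mod_cast hp1)
      have c2 : s < (p.2 : ℝ) := lt_of_lt_of_le hsK1 (by exact_mod_cast hp2)
      push_cast at hple
      nlinarith [c1, c2, hss, hs1]
  have hAeq : A = ((Finset.Icc 1 K ×ˢ Finset.Icc 1 N).filter
      (fun p : ℕ × ℕ => ((p.1 * p.2 : ℕ) : ℝ) ≤ y)) := by
    ext p
    simp only [hA, hF, Finset.mem_filter, Finset.mem_product, Finset.mem_Icc]
    constructor
    · rintro ⟨⟨⟨⟨a1, _⟩, b⟩, c⟩, d⟩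
      exact ⟨⟨⟨a1, d⟩, b⟩, c⟩
    · rintro ⟨⟨⟨a1, a2⟩, b⟩, c⟩
      exact ⟨⟨⟨⟨a1, a2.trans hKN⟩, b⟩, c⟩, a2⟩
  have hcardA : A.card = ∑ i ∈ Finset.Icc 1 K, ⌊y / (i:ℝ)⌋₊ := by
    rw [hAeq]; exact hyper_count y hy0 K
  have hcardB : B.card = A.card := by
    refine Finset.card_bij' (fun p _ => p.swap) (fun p _ => p.swap) ?_ ?_ ?_ ?_
    · intro p hp
      simp only [hA, hB, hF, Finset.mem_filter, Finset.mem_product] at hp ⊢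
      obtain ⟨⟨⟨h1, h2⟩, h3⟩, h4⟩ := hp
      exact ⟨⟨⟨h2, h1⟩, by rwa [Nat.mul_comm] at h3⟩, h4⟩
    · intro p hp
      simp only [hA, hB, hF, Finset.mem_filter, Finset.mem_product] at hp ⊢
      obtain ⟨⟨⟨h1, h2⟩, h3⟩, h4⟩ := hp
      exact ⟨⟨⟨h2, h1⟩, by rwa [Nat.mul_comm] at h3⟩, h4⟩
    · intro p _; exact Prod.swap_swap p
    · intro p _; exact Prod.swap_swap p
  have hInter : A ∩ B = Finset.Icc 1 K ×ˢ Finset.Icc 1 K := by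
    ext p
    simp only [hA, hB, hF, Finset.mem_inter, Finset.mem_filter, Finset.mem_product,
      Finset.mem_Icc]
    constructor
    · rintro ⟨⟨⟨⟨⟨a1, _⟩, ⟨b1, _⟩⟩, _⟩, d⟩, ⟨_, e⟩⟩
      exact ⟨⟨a1, d⟩, b1, e⟩
    · rintro ⟨⟨a1, a2⟩, b1, b2⟩
      have hle : ((p.1 * p.2 : ℕ) : ℝ) ≤ y := by
        push_cast
        have c1 : (p.1:ℝ) ≤ K := by exact_mod_cast a2
        have c2 : (p.2:ℝ) ≤ K := by exact_mod_cast b2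
        have c3 : (0:ℝ) ≤ p.1 := by positivity
        nlinarith [hKs, hss, c1, c2, hs1]
      exact ⟨⟨⟨⟨⟨a1, a2.trans hKN⟩, ⟨b1, b2.trans hKN⟩⟩, hle⟩, a2⟩, ⟨⟨⟨a1, a2.trans hKN⟩, ⟨b1, b2.trans hKN⟩⟩, hle⟩, b2⟩
  have hIC : (A ∩ B).card = K * K := by
    rw [hInter, Finset.card_product, Nat.card_Icc]; simp
  have hFC : F.card = ∑ i ∈ Finset.Icc 1 N, ⌊y / (i:ℝ)⌋₊ := hyper_count y hy0 N
  have key := Finset.card_union_add_card_inter A B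
  rw [hUnion, hIC, hcardA, hcardB, hcardA] at key
  omega

lemma harm_bound (K : ℕ) (hK : 1 ≤ K) :
    |(harmonic K : ℝ) - Real.log K - Real.eulerMascheroniConstant| ≤ 1 / K := by
  have hK0 : (0:ℝ) < K := by exact_mod_cast hK
  have h1 : (harmonic K : ℝ) - Real.log (K + 1) < Real.eulerMascheroniConstant := by
    have := Real.eulerMascheroniSeq_lt_eulerMascheroniConstant K
    simpa [Real.eulerMascheroniSeq] using this
  have h2 : Real.eulerMascheroniConstant < (harmonic K : ℝ) - Real.log K := by
    have := Real.eulerMascheroniConstant_lt_eulerMascheroniSeq' K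
    rw [Real.eulerMascheroniSeq', if_neg (by omega)] at this
    exact this
  have h3 : Real.log ((K:ℝ) + 1) - Real.log K ≤ 1 / K := by
    rw [← Real.log_div (by positivity) (by positivity)]
    have := Real.log_le_sub_one_of_pos (x := ((K:ℝ)+1)/K) (by positivity)
    have he : ((K:ℝ)+1)/K - 1 = 1/K := by field_simp; ring
    linarith [this, he ▸ this]
  rw [abs_le]
  constructor <;> nlinarith [h1, h2, h3, Real.log_le_log (by positivity : (0:ℝ) < (K:ℝ))
    (by linarith : (K:ℝ) ≤ (K:ℝ)+1)]

lemma sumfloor_bound (y : ℝ) (hy0 : 0 ≤ y) (K : ℕ) :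
    |(∑ i ∈ Finset.Icc 1 K, (⌊y / (i:ℝ)⌋₊ : ℝ)) - y * (harmonic K : ℝ)| ≤ K := by
  have hH : y * (harmonic K : ℝ) = ∑ i ∈ Finset.Icc 1 K, y / (i:ℝ) := by
    rw [harmonic_eq_sum_Icc]
    push_cast
    rw [Finset.mul_sum]
    refine Finset.sum_congr rfl fun i _ => ?_
    rw [div_eq_mul_inv]
  rw [hH, ← Finset.sum_sub_distrib]
  refine (Finset.abs_sum_le_sum_abs _ _).trans ?_
  have : ∀ i ∈ Finset.Icc 1 K, |(⌊y / (i:ℝ)⌋₊ : ℝ) - y / (i:ℝ)| ≤ 1 := by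
    intro i hi
    have hi1 : (0:ℝ) < i := by exact_mod_cast (Finset.mem_Icc.mp hi).1
    have ht : (0:ℝ) ≤ y / i := by positivity
    have l1 : (⌊y / (i:ℝ)⌋₊ : ℝ) ≤ y / i := Nat.floor_le ht
    have l2 : y / i < ⌊y / (i:ℝ)⌋₊ + 1 := Nat.lt_floor_add_one _
    rw [abs_le]; constructor <;> linarith
  calc ∑ i ∈ Finset.Icc 1 K, |(⌊y / (i:ℝ)⌋₊ : ℝ) - y / (i:ℝ)|
      ≤ ∑ _i ∈ Finset.Icc 1 K, (1:ℝ) := Finset.sum_le_sum this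
    _ = K := by simp

set_option maxHeartbeats 1000000 in
lemma main_bound (y : ℝ) (hy : 1 ≤ y) :
    |(∑ i ∈ Finset.Icc 1 ⌊y⌋₊, (⌊y / (i : ℝ)⌋₊ : ℝ)) - y * Real.log y -
        (2 * Real.eulerMascheroniConstant - 1) * y| ≤ 12 * Real.sqrt y := by
  have hy0 : (0:ℝ) ≤ y := by linarith
  set s := Real.sqrt y with hs
  set K := ⌊s⌋₊ with hKdef
  have hs1 : 1 ≤ s := by
    rw [hs, show (1:ℝ) = Real.sqrt 1 by simp]; exact Real.sqrt_le_sqrt hy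
  have hss : s * s = y := Real.mul_self_sqrt hy0
  have hK1 : 1 ≤ K := Nat.one_le_floor_iff s |>.mpr hs1
  have hKs : (K:ℝ) ≤ s := Nat.floor_le (by linarith)
  have hsK1 : s < (K:ℝ) + 1 := Nat.lt_floor_add_one s
  have hK0 : (0:ℝ) < K := by exact_mod_cast hK1
  have hK2 : s ≤ 2 * K := by
    rcases le_or_gt s 2 with h | h
    · have : (1:ℝ) ≤ K := by exact_mod_cast hK1
      linarith
    · linarith
  set T := ∑ i ∈ Finset.Icc 1 K, (⌊y / (i:ℝ)⌋₊ : ℝ) with hT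
  set Ssum := ∑ i ∈ Finset.Icc 1 ⌊y⌋₊, (⌊y / (i:ℝ)⌋₊ : ℝ) with hSsum
  have h1 : Ssum = 2 * T - (K:ℝ) * K := by
    have h := congrArg (fun n : ℕ => (n : ℝ)) (hyperbola y hy)
    push_cast at h
    rw [hSsum, hT]
    linarith [h]
  set γ := Real.eulerMascheroniConstant with hγ
  set H := (harmonic K : ℝ) with hH
  set L := Real.log (K:ℝ) with hL
  have hlogy : Real.log y = 2 * Real.log s := by
    rw [hs, Real.log_sqrt hy0]; ring
  -- error terms
  have he1 : |T - y * H| ≤ (K:ℝ) := sumfloor_bound y hy0 K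
  have he2 : |H - L - γ| ≤ 1 / K := harm_bound K hK1
  clear_value Ssum T H γ L
  clear_value K s
  have he3 : |2 * L - Real.log y| ≤ 2 / K := by
    rw [hlogy]
    have hKpos : (0:ℝ) < K := hK0
    have hlog1 : L ≤ Real.log s := hL ▸ Real.log_le_log hKpos hKs
    have hlog2 : Real.log s - L ≤ 1 / K := by
      rw [hL, ← Real.log_div (by linarith) (by positivity)]
      have h := Real.log_le_sub_one_of_pos (x := s / K) (by positivity)
      have he : s / (K:ℝ) - 1 ≤ 1 / K := by
        rw [div_sub' (by positivity : (K:ℝ) ≠ 0)]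
        gcongr
        linarith
      linarith
    have hpos : (0:ℝ) ≤ 2 / K := by positivity
    have h2K : 2 / (K:ℝ) = 2 * (1 / K) := by ring
    rw [abs_le]; constructor <;> linarith
  have he4 : 0 ≤ y - (K:ℝ) * K ∧ y - (K:ℝ) * K ≤ 2 * s := by
    constructor <;> nlinarith [hKs, hss, hsK1, hs1]
  have hexpr : Ssum - y * Real.log y - (2 * γ - 1) * y
      = 2 * (T - y * H) + 2 * (y * (H - L - γ)) + y * (2 * L - Real.log y)
        + (y - (K:ℝ) * K) := by
    rw [h1]; ring
  have hys : y / K ≤ 2 * s := by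
    rw [div_le_iff₀ hK0]
    nlinarith [hK2, hss, hs1, hK0]
  have b1 : |2 * (T - y * H)| ≤ 2 * s := by
    rw [abs_mul, abs_two]
    nlinarith [he1, hKs]
  have b2 : |2 * (y * (H - L - γ))| ≤ 4 * s := by
    rw [abs_mul, abs_two, abs_mul, abs_of_nonneg hy0]
    have : y * |H - L - γ| ≤ y * (1 / K) := by
      apply mul_le_mul_of_nonneg_left he2 hy0
    have h2 : y * (1 / K) = y / K := by ring
    nlinarith [this, hys]
  have b3 : |y * (2 * L - Real.log y)| ≤ 4 * s := by
    rw [abs_mul, abs_of_nonneg hy0]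
    have : y * |2 * L - Real.log y| ≤ y * (2 / K) := mul_le_mul_of_nonneg_left he3 hy0
    have h2 : y * (2 / K) = 2 * (y / K) := by ring
    nlinarith [this, hys]
  have b4 : |y - (K:ℝ) * K| ≤ 2 * s := by
    rw [abs_of_nonneg he4.1]; exact he4.2
  calc |Ssum - y * Real.log y - (2 * γ - 1) * y|
      = |2 * (T - y * H) + 2 * (y * (H - L - γ)) + y * (2 * L - Real.log y)
        + (y - (K:ℝ) * K)| := by rw [hexpr]
    _ ≤ |2 * (T - y * H) + 2 * (y * (H - L - γ)) + y * (2 * L - Real.log y)|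
        + |y - (K:ℝ) * K| := abs_add_le _ _
    _ ≤ (|2 * (T - y * H) + 2 * (y * (H - L - γ))| + |y * (2 * L - Real.log y)|)
        + |y - (K:ℝ) * K| := add_le_add (abs_add_le _ _) le_rfl
    _ ≤ ((|2 * (T - y * H)| + |2 * (y * (H - L - γ))|) + |y * (2 * L - Real.log y)|)
        + |y - (K:ℝ) * K| := add_le_add (add_le_add (abs_add_le _ _) le_rfl) le_rfl
    _ ≤ ((2 * s + 4 * s) + 4 * s) + 2 * s :=
        add_le_add (add_le_add (add_le_add b1 b2) b3) b4
    _ = 12 * s := by ring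

/-- Dirichlet's divisor theorem: the number of pairs `(i₁, i₂)` of positive integers
with `i₁·i₂ ≤ x` equals `∑_{i=1}^{⌊x⌋} ⌊x/i⌋`; this sum satisfies
`|∑ ⌊x/i⌋ − x ln x − (2γ−1)x| = O(√x)` (with `γ` the Euler–Mascheroni constant),
and in particular it is asymptotic to `x ln x`. -/
theorem dirichlet_divisor (x : ℝ) (hx : 1 ≤ x) :
    (Nat.card {p : ℕ × ℕ // 0 < p.1 ∧ 0 < p.2 ∧ (p.1 * p.2 : ℝ) ≤ x} =
      ∑ i ∈ Finset.Icc 1 ⌊x⌋₊, ⌊x / (i : ℝ)⌋₊) ∧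
    (∃ C : ℝ, ∀ y : ℝ, 1 ≤ y →
      |(∑ i ∈ Finset.Icc 1 ⌊y⌋₊, (⌊y / (i : ℝ)⌋₊ : ℝ)) - y * Real.log y -
          (2 * Real.eulerMascheroniConstant - 1) * y| ≤ C * Real.sqrt y) ∧
    Tendsto (fun y : ℝ =>
        (∑ i ∈ Finset.Icc 1 ⌊y⌋₊, (⌊y / (i : ℝ)⌋₊ : ℝ)) / (y * Real.log y))
      atTop (nhds 1) := by
  have hx0 : (0:ℝ) ≤ x := by linarith
  refine ⟨?_, ⟨12, fun y hy => main_bound y hy⟩, ?_⟩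
  · -- counting part
    set F := ((Finset.Icc 1 ⌊x⌋₊ ×ˢ Finset.Icc 1 ⌊x⌋₊).filter
      (fun p : ℕ × ℕ => ((p.1 * p.2 : ℕ) : ℝ) ≤ x)) with hF
    have hset : {p : ℕ × ℕ | 0 < p.1 ∧ 0 < p.2 ∧ (p.1 * p.2 : ℝ) ≤ x} = ↑F := by
      ext p
      simp only [Set.mem_setOf_eq, hF, Finset.coe_filter, Finset.mem_product, Finset.mem_Icc,
        Set.mem_setOf_eq]
      constructor
      · rintro ⟨h1, h2, h3⟩
        have c1 : (1:ℝ) ≤ p.1 := by exact_mod_cast h1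
        have c2 : (1:ℝ) ≤ p.2 := by exact_mod_cast h2
        have b1 : p.1 ≤ ⌊x⌋₊ := Nat.le_floor (by nlinarith)
        have b2 : p.2 ≤ ⌊x⌋₊ := Nat.le_floor (by nlinarith)
        exact ⟨⟨⟨h1, b1⟩, h2, b2⟩, by push_cast; exact h3⟩
      · rintro ⟨⟨⟨h1, _⟩, h2, _⟩, h3⟩
        exact ⟨h1, h2, by push_cast at h3; exact h3⟩
    calc Nat.card {p : ℕ × ℕ // 0 < p.1 ∧ 0 < p.2 ∧ (p.1 * p.2 : ℝ) ≤ x}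
        = Set.ncard {p : ℕ × ℕ | 0 < p.1 ∧ 0 < p.2 ∧ (p.1 * p.2 : ℝ) ≤ x} :=
          (Nat.card_coe_set_eq _).symm
      _ = F.card := by rw [hset, Set.ncard_coe_finset]
      _ = ∑ i ∈ Finset.Icc 1 ⌊x⌋₊, ⌊x / (i:ℝ)⌋₊ := hyper_count x hx0 ⌊x⌋₊
  · -- asymptotic part
    set γ := Real.eulerMascheroniConstant with hγ
    set f : ℝ → ℝ := fun y => ∑ i ∈ Finset.Icc 1 ⌊y⌋₊, (⌊y / (i:ℝ)⌋₊ : ℝ) with hf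
    have hlim1 : Tendsto (fun y : ℝ => (f y - y * Real.log y - (2*γ-1)*y) / (y * Real.log y))
        atTop (nhds 0) := by
      have hb : ∀ᶠ y : ℝ in atTop,
          ‖(f y - y * Real.log y - (2*γ-1)*y) / (y * Real.log y)‖ ≤ 12 / (Real.sqrt y * Real.log y) := by
        filter_upwards [eventually_ge_atTop (2:ℝ)] with y hy2
        have hy1 : (1:ℝ) ≤ y := by linarith
        have hy0 : (0:ℝ) < y := by linarith
        have hlog : 0 < Real.log y := Real.log_pos (by linarith)
        have hsq : 0 < Real.sqrt y := Real.sqrt_pos.mpr hy0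
        have hss : Real.sqrt y * Real.sqrt y = y := Real.mul_self_sqrt hy0.le
        rw [norm_div, Real.norm_eq_abs, Real.norm_eq_abs,
          abs_of_pos (by positivity : (0:ℝ) < y * Real.log y)]
        have h := main_bound y hy1
        have key : 12 * Real.sqrt y / (y * Real.log y) = 12 / (Real.sqrt y * Real.log y) := by
          rw [div_eq_div_iff (by positivity) (by positivity)]
          linear_combination 12 * Real.log y * hss
        calc |f y - y * Real.log y - (2*γ-1)*y| / (y * Real.log y)
            ≤ 12 * Real.sqrt y / (y * Real.log y) := by gcongr
          _ = 12 / (Real.sqrt y * Real.log y) := key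
      have hsqrt : Tendsto Real.sqrt atTop atTop := by
        apply tendsto_atTop_atTop_of_monotone (fun a b hab => Real.sqrt_le_sqrt hab)
        intro b
        exact ⟨(max b 0) ^ 2, by rw [Real.sqrt_sq (le_max_right b 0)]; exact le_max_left b 0⟩
      have hden : Tendsto (fun y : ℝ => Real.sqrt y * Real.log y) atTop atTop :=
        hsqrt.atTop_mul_atTop₀ Real.tendsto_log_atTop
      have : Tendsto (fun y : ℝ => 12 / (Real.sqrt y * Real.log y)) atTop (nhds 0) :=
        tendsto_const_nhds.div_atTop hden
      exact squeeze_zero_norm' hb this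
    have hlim2 : Tendsto (fun y : ℝ => ((2*γ-1)*y) / (y * Real.log y)) atTop (nhds 0) := by
      have : Tendsto (fun y : ℝ => (2*γ-1) / Real.log y) atTop (nhds 0) :=
        tendsto_const_nhds.div_atTop Real.tendsto_log_atTop
      refine this.congr' ?_
      filter_upwards [eventually_gt_atTop (1:ℝ)] with y hy1
      rw [show (2*γ-1)*y = y*(2*γ-1) by ring,
        mul_div_mul_left _ _ (by linarith : y ≠ 0)]
    have hsum : Tendsto (fun y : ℝ =>
        (f y - y * Real.log y - (2*γ-1)*y) / (y * Real.log y) + ((2*γ-1)*y) / (y * Real.log y) + 1)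
        atTop (nhds 1) := by
      have := (hlim1.add hlim2).add_const 1
      simpa using this
    refine hsum.congr' ?_
    filter_upwards [eventually_gt_atTop (1:ℝ)] with y hy1
    have hlogne : y * Real.log y ≠ 0 := by
      have := Real.log_pos hy1
      positivity
    field_simp
    have hl := (Real.log_pos hy1).ne'
    simp only [hf]; rw [eq_div_iff hl, add_mul, div_mul_cancel₀ _ hl]; ring
end

section
/- Number of nodes explored by threshold-pruned depth-first search: in the power-law model with β = 1, the number of prefixes (of any length ℓ ≤ L) whose NLL is at most σ equals ∑_{ℓ=1}^{L} N(σ, ℓ), where N(σ, ℓ) is the number of ℓ-tuples of positive integers with product at most e^{σ/α}. Hence the total work of the pruned tree search is ∑_{ℓ=1}^L N(σ, ℓ), which is asymptotically (as σ → ∞, L fixed) dominated by the leaf count N(σ, L), i.e., ∑_{ℓ=1}^L N(σ,ℓ) / N(σ,L) → 1. -/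
open Finset Filter

/-- `N(σ, ℓ)`: the number of `ℓ`-tuples of positive integers with product at most
`e^{σ/α}` (power-law model with `β = 1`). -/
noncomputable def Npow (α σ : ℝ) (ℓ : ℕ) : ℕ :=
  Nat.card {f : Fin ℓ → ℕ // (∀ l, 0 < f l) ∧
    (∏ l, (f l : ℝ)) ≤ Real.exp (σ / α)}

/-- Finset of positive `ℓ`-tuples with product at most `n`. -/
def Tfin (n ℓ : ℕ) : Finset (Fin ℓ → ℕ) :=
  (Fintype.piFinset fun _ : Fin ℓ => Finset.Icc 1 n).filter fun f => ∏ l, f l ≤ n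

/-- Its cardinality. -/
def Tc (n ℓ : ℕ) : ℕ := (Tfin n ℓ).card

lemma mem_Tfin {n ℓ : ℕ} {f : Fin ℓ → ℕ} :
    f ∈ Tfin n ℓ ↔ (∀ l, f l ∈ Finset.Icc 1 n) ∧ ∏ l, f l ≤ n := by
  simp [Tfin, Fintype.mem_piFinset]

lemma Tc_succ (n ℓ : ℕ) :
    Tc n (ℓ + 1)
      = ∑ g ∈ Fintype.piFinset (fun _ : Fin ℓ => Finset.Icc 1 n), n / ∏ l, g l := by
  rw [Tc, Finset.card_eq_sum_card_fiberwise
    (f := fun f (l : Fin ℓ) => f l.castSucc)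
    (t := Fintype.piFinset fun _ : Fin ℓ => Finset.Icc 1 n)
    (fun f hf => Fintype.mem_piFinset.2 fun l => (mem_Tfin.1 hf).1 _)]
  refine Finset.sum_congr rfl fun g hg => ?_
  have hg' : ∀ l, g l ∈ Finset.Icc 1 n := Fintype.mem_piFinset.1 hg
  have hpos : 0 < ∏ l, g l := Finset.prod_pos fun l _ => (Finset.mem_Icc.1 (hg' l)).1
  have hfib : ((Tfin n (ℓ+1)).filter fun f => (fun l : Fin ℓ => f l.castSucc) = g)
      = (Finset.Icc 1 (n / ∏ l, g l)).image (Fin.snoc g) := by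
    ext f
    simp only [Finset.mem_filter, Finset.mem_image, Finset.mem_Icc]
    constructor
    · rintro ⟨hf, rfl⟩
      obtain ⟨hmem, hprod⟩ := mem_Tfin.1 hf
      refine ⟨f (Fin.last ℓ), ⟨(Finset.mem_Icc.1 (hmem _)).1, ?_⟩, ?_⟩
      · rw [Nat.le_div_iff_mul_le hpos, mul_comm]
        calc (∏ l : Fin ℓ, f l.castSucc) * f (Fin.last ℓ) = ∏ l, f l :=
              (Fin.prod_univ_castSucc f).symm
          _ ≤ n := hprod
      · exact Fin.snoc_init_self f
    · rintro ⟨m, ⟨hm1, hm2⟩, rfl⟩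
      have hmul : (∏ l : Fin ℓ, g l) * m ≤ n := by
        rw [mul_comm]; exact (Nat.le_div_iff_mul_le hpos).1 hm2
      refine ⟨mem_Tfin.2 ⟨?_, ?_⟩, ?_⟩
      · intro l
        refine Fin.lastCases ?_ ?_ l
        · rw [Fin.snoc_last]
          exact Finset.mem_Icc.2 ⟨hm1, le_trans hm2 (Nat.div_le_self _ _)⟩
        · intro i; rw [Fin.snoc_castSucc]; exact hg' i
      · rw [Fin.prod_univ_castSucc]
        simp only [Fin.snoc_castSucc, Fin.snoc_last]
        exact hmul
      · funext l; rw [Fin.snoc_castSucc]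
  rw [hfib, Finset.card_image_of_injective _ ?_, Nat.card_Icc, Nat.add_sub_cancel]
  intro a b hab
  have := congrArg (fun f : Fin (ℓ+1) → ℕ => f (Fin.last ℓ)) hab
  simpa using this

lemma harm_Icc (n : ℕ) : ∑ m ∈ Finset.Icc 1 n, ((m : ℝ))⁻¹ = (harmonic n : ℝ) := by
  rw [harmonic_eq_sum_Icc]
  push_cast
  rfl

lemma Tc_upper (n ℓ : ℕ) : (Tc n (ℓ + 1) : ℝ) ≤ n * (harmonic n : ℝ) ^ ℓ := by
  have h1 : (Tc n (ℓ+1) : ℝ)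
      = ∑ g ∈ Fintype.piFinset (fun _ : Fin ℓ => Finset.Icc 1 n),
          ((n / ∏ l, g l : ℕ) : ℝ) := by
    rw [Tc_succ]; push_cast; rfl
  rw [h1]
  calc ∑ g ∈ Fintype.piFinset (fun _ : Fin ℓ => Finset.Icc 1 n), ((n / ∏ l, g l : ℕ) : ℝ)
      ≤ ∑ g ∈ Fintype.piFinset (fun _ : Fin ℓ => Finset.Icc 1 n),
          (n : ℝ) * ∏ l, ((g l : ℝ))⁻¹ := by
        refine Finset.sum_le_sum fun g hg => ?_
        calc ((n / ∏ l, g l : ℕ) : ℝ) ≤ (n : ℝ) / ((∏ l, g l : ℕ) : ℝ) := Nat.cast_div_le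
          _ = (n : ℝ) * ∏ l, ((g l : ℝ))⁻¹ := by
              rw [Nat.cast_prod, div_eq_mul_inv, ← Finset.prod_inv_distrib]
    _ = (n : ℝ) * ∑ g ∈ Fintype.piFinset (fun _ : Fin ℓ => Finset.Icc 1 n),
          ∏ l, ((g l : ℝ))⁻¹ := by rw [Finset.mul_sum]
    _ = (n : ℝ) * (harmonic n : ℝ) ^ ℓ := by
        rw [Finset.sum_prod_piFinset (Finset.Icc 1 n) (fun _ m => ((m : ℝ))⁻¹)]
        simp [harm_Icc]

lemma Tc_lower (n ℓ M : ℕ) (hM : 1 ≤ M) (hMn : M ≤ n) (h2 : 2 * M ^ ℓ ≤ n) :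
    (n : ℝ) / 2 * (harmonic M : ℝ) ^ ℓ ≤ (Tc n (ℓ + 1) : ℝ) := by
  have key : ∀ g ∈ Fintype.piFinset (fun _ : Fin ℓ => Finset.Icc 1 M),
      (n : ℝ) / 2 * ∏ l, ((g l : ℝ))⁻¹ ≤ ((n / ∏ l, g l : ℕ) : ℝ) := by
    intro g hg
    have hg' : ∀ l, g l ∈ Finset.Icc 1 M := Fintype.mem_piFinset.1 hg
    have hPpos : 0 < ∏ l, g l := Finset.prod_pos fun l _ => (Finset.mem_Icc.1 (hg' l)).1
    have hPM : (∏ l, g l) ≤ M ^ ℓ := by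
      calc ∏ l, g l ≤ ∏ _l : Fin ℓ, M :=
            Finset.prod_le_prod' fun l _ => (Finset.mem_Icc.1 (hg' l)).2
        _ = M ^ ℓ := by simp
    set P : ℝ := ((∏ l, g l : ℕ) : ℝ) with hPdef
    have hPpos' : (0 : ℝ) < P := by rw [hPdef]; exact_mod_cast hPpos
    have hP2 : 2 * P ≤ (n : ℝ) := by
      have : 2 * (∏ l, g l) ≤ n := le_trans (by exact Nat.mul_le_mul_left 2 hPM) h2
      rw [hPdef]; exact_mod_cast this
    have hfloor : (n : ℝ) / P - 1 < ((n / ∏ l, g l : ℕ) : ℝ) := by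
      have h := Nat.sub_one_lt_floor ((n : ℝ) / P)
      have heq : ⌊(n : ℝ) / P⌋₊ = n / ∏ l, g l := by
        rw [hPdef, Nat.floor_div_natCast, Nat.floor_natCast]
      rw [heq] at h
      exact h
    have hq : (n : ℝ) * P⁻¹ ≥ 2 := by
      rw [ge_iff_le, ← div_eq_mul_inv, le_div_iff₀ hPpos']; linarith
    have hprodinv : ∏ l, ((g l : ℝ))⁻¹ = P⁻¹ := by
      rw [hPdef, Nat.cast_prod, ← Finset.prod_inv_distrib]
    rw [hprodinv]
    have hrw : (n : ℝ) / P = n * P⁻¹ := div_eq_mul_inv _ _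
    rw [hrw] at hfloor
    have : (n : ℝ) / 2 * P⁻¹ = n * P⁻¹ / 2 := by ring
    rw [this]
    linarith
  have hsub : Fintype.piFinset (fun _ : Fin ℓ => Finset.Icc 1 M)
      ⊆ Fintype.piFinset (fun _ : Fin ℓ => Finset.Icc 1 n) :=
    Fintype.piFinset_subset _ _ fun _ => Finset.Icc_subset_Icc_right hMn
  have h1 : (Tc n (ℓ+1) : ℝ)
      = ∑ g ∈ Fintype.piFinset (fun _ : Fin ℓ => Finset.Icc 1 n),
          ((n / ∏ l, g l : ℕ) : ℝ) := by
    rw [Tc_succ]; push_cast; rfl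
  rw [h1]
  calc (n : ℝ) / 2 * (harmonic M : ℝ) ^ ℓ
      = ∑ g ∈ Fintype.piFinset (fun _ : Fin ℓ => Finset.Icc 1 M),
          (n : ℝ) / 2 * ∏ l, ((g l : ℝ))⁻¹ := by
        rw [← Finset.mul_sum, Finset.sum_prod_piFinset (Finset.Icc 1 M) (fun _ m => ((m : ℝ))⁻¹)]
        simp [harm_Icc]
    _ ≤ ∑ g ∈ Fintype.piFinset (fun _ : Fin ℓ => Finset.Icc 1 M),
          ((n / ∏ l, g l : ℕ) : ℝ) := Finset.sum_le_sum key
    _ ≤ ∑ g ∈ Fintype.piFinset (fun _ : Fin ℓ => Finset.Icc 1 n),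
          ((n / ∏ l, g l : ℕ) : ℝ) :=
        Finset.sum_le_sum_of_subset_of_nonneg hsub fun _ _ _ => by positivity

lemma aux_tendsto (K : ℕ) (hK : 1 ≤ K) :
    Tendsto (fun y : ℝ => 2 * (1 + y) ^ (K - 1) / (y / (2 * K)) ^ K) atTop (nhds 0) := by
  have h1 : Tendsto (fun y : ℝ => (y⁻¹ + 1) ^ (K - 1) * y⁻¹) atTop
      (nhds (((0 : ℝ) + 1) ^ (K - 1) * 0)) :=
    ((tendsto_inv_atTop_zero.add tendsto_const_nhds).pow _).mul tendsto_inv_atTop_zero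
  rw [show ((0 : ℝ) + 1) ^ (K - 1) * 0 = 0 by ring] at h1
  have h2 := h1.const_mul (2 * (2 * (K : ℝ)) ^ K)
  rw [mul_zero] at h2
  refine h2.congr' ?_
  filter_upwards [eventually_gt_atTop 0] with y hy
  obtain ⟨j, rfl⟩ : ∃ j, K = j + 1 := ⟨K - 1, (Nat.succ_pred_eq_of_pos hK).symm⟩
  have hy' : y ≠ 0 := ne_of_gt hy
  have hK' : (2 : ℝ) * (↑(j + 1)) ≠ 0 := by positivity
  simp only [Nat.add_sub_cancel]
  rw [show y⁻¹ + 1 = (1 + y) / y by field_simp, div_pow, div_pow, pow_succ y]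
  field_simp

lemma ratio_to_zero (K ℓ : ℕ) (hℓ : ℓ ∈ Finset.Icc 1 K) :
    Tendsto (fun n : ℕ => (Tc n ℓ : ℝ) / (Tc n (K + 1) : ℝ)) atTop (nhds 0) := by
  obtain ⟨hℓ1, hℓK⟩ := Finset.mem_Icc.1 hℓ
  have hK : 1 ≤ K := hℓ1.trans hℓK
  obtain ⟨j, rfl⟩ : ∃ j, ℓ = j + 1 := ⟨ℓ - 1, (Nat.succ_pred_eq_of_pos hℓ1).symm⟩
  have hjK : j ≤ K - 1 := by omega
  set B : ℕ → ℝ := fun n =>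
    2 * (1 + Real.log n) ^ (K - 1) / (Real.log n / (2 * K)) ^ K with hB
  have hBt : Tendsto B atTop (nhds 0) :=
    (aux_tendsto K hK).comp (Real.tendsto_log_atTop.comp tendsto_natCast_atTop_atTop)
  refine tendsto_of_tendsto_of_tendsto_of_le_of_le' tendsto_const_nhds hBt
    (Eventually.of_forall fun n => by positivity) ?_
  -- eventual hypotheses
  have hM : Tendsto (fun n : ℕ => ⌊(n : ℝ) ^ ((1 : ℝ) / (2 * K))⌋₊) atTop atTop :=
    tendsto_nat_floor_atTop.comp
      ((tendsto_rpow_atTop (by positivity)).comp tendsto_natCast_atTop_atTop)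
  filter_upwards [eventually_ge_atTop 4, hM.eventually_ge_atTop 1,
    (Real.tendsto_log_atTop.comp tendsto_natCast_atTop_atTop).eventually_gt_atTop 0]
    with n hn4 hM1 hlog
  simp only [Function.comp] at hM1 hlog
  set M : ℕ := ⌊(n : ℝ) ^ ((1 : ℝ) / (2 * K))⌋₊ with hMdef
  have hn1 : 1 ≤ n := by omega
  have hnR : (1 : ℝ) ≤ (n : ℝ) := by exact_mod_cast hn1
  have hnpos : (0 : ℝ) < n := by linarith
  have hKR : (0 : ℝ) < (K : ℝ) := by exact_mod_cast hK
  -- basic facts about M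
  have hMle : (M : ℝ) ≤ (n : ℝ) ^ ((1 : ℝ) / (2 * K)) := Nat.floor_le (by positivity)
  have hexp : ((n : ℝ) ^ ((1 : ℝ) / (2 * K))) ^ (K : ℕ) = (n : ℝ) ^ ((1 : ℝ) / 2) := by
    rw [← Real.rpow_natCast ((n : ℝ) ^ ((1 : ℝ) / (2 * K))) K, ← Real.rpow_mul hnpos.le]
    congr 1
    field_simp
  have hsqrt2 : (2 : ℝ) ≤ (n : ℝ) ^ ((1 : ℝ) / 2) := by
    have h4 : (4 : ℝ) ≤ (n : ℝ) := by exact_mod_cast hn4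
    have : (4 : ℝ) ^ ((1 : ℝ) / 2) ≤ (n : ℝ) ^ ((1 : ℝ) / 2) :=
      Real.rpow_le_rpow (by norm_num) h4 (by norm_num)
    calc (2 : ℝ) = (4 : ℝ) ^ ((1 : ℝ) / 2) := by
          rw [show (4 : ℝ) = 2 ^ (2 : ℕ) by norm_num, ← Real.rpow_natCast 2 2,
            ← Real.rpow_mul (by norm_num)]
          norm_num
      _ ≤ _ := this
  have h2Mn : 2 * M ^ K ≤ n := by
    have hcast : (2 : ℝ) * (M : ℝ) ^ K ≤ (n : ℝ) := by
      have h1 : ((M : ℝ)) ^ K ≤ (n : ℝ) ^ ((1 : ℝ) / 2) := by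
        calc ((M : ℝ)) ^ K ≤ ((n : ℝ) ^ ((1 : ℝ) / (2 * K))) ^ K :=
              pow_le_pow_left₀ (by positivity) hMle K
          _ = (n : ℝ) ^ ((1 : ℝ) / 2) := hexp
      have h2 : (2 : ℝ) * (n : ℝ) ^ ((1 : ℝ) / 2) ≤ (n : ℝ) := by
        have : (n : ℝ) ^ ((1 : ℝ) / 2) * (n : ℝ) ^ ((1 : ℝ) / 2) = (n : ℝ) := by
          rw [← Real.rpow_add hnpos]; norm_num
        nlinarith [Real.rpow_nonneg hnpos.le ((1 : ℝ) / 2)]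
      linarith
    exact_mod_cast hcast
  have hMn : M ≤ n := by
    have hexp1 : ((1 : ℝ)) / (2 * K) ≤ 1 := by
      rw [div_le_one (by positivity)]
      have h1K : (1 : ℝ) ≤ (K : ℝ) := by exact_mod_cast hK
      linarith
    have hcast : (M : ℝ) ≤ (n : ℝ) := by
      calc (M : ℝ) ≤ (n : ℝ) ^ ((1 : ℝ) / (2 * K)) := hMle
        _ ≤ (n : ℝ) ^ (1 : ℝ) := Real.rpow_le_rpow_of_exponent_le hnR hexp1
        _ = (n : ℝ) := Real.rpow_one _
    exact_mod_cast hcast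
  -- harmonic bounds
  have hharmM : Real.log n / (2 * K) ≤ (harmonic M : ℝ) := by
    have h1 : (n : ℝ) ^ ((1 : ℝ) / (2 * K)) < (M : ℝ) + 1 := Nat.lt_floor_add_one _
    have h2 : Real.log ((n : ℝ) ^ ((1 : ℝ) / (2 * K))) ≤ Real.log ((M : ℝ) + 1) :=
      Real.log_le_log (by positivity) h1.le
    rw [Real.log_rpow hnpos] at h2
    have h3 := log_add_one_le_harmonic M
    have : Real.log ↑(M + 1) = Real.log ((M : ℝ) + 1) := by push_cast; rfl
    rw [this] at h3
    calc Real.log n / (2 * K) = 1 / (2 * K) * Real.log n := by ring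
      _ ≤ Real.log ((M : ℝ) + 1) := h2
      _ ≤ _ := h3
  have hharmn : (harmonic n : ℝ) ≤ 1 + Real.log n := harmonic_le_one_add_log n
  have hharmn0 : (0 : ℝ) ≤ (harmonic n : ℝ) := by
    have := harmonic_pos (n := n) (by omega)
    exact_mod_cast this.le
  -- the chain
  have hnum : (Tc n (j + 1) : ℝ) ≤ (n : ℝ) * (1 + Real.log n) ^ (K - 1) := by
    calc (Tc n (j + 1) : ℝ) ≤ (n : ℝ) * (harmonic n : ℝ) ^ j := Tc_upper n j
      _ ≤ (n : ℝ) * (1 + Real.log n) ^ j := by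
          exact mul_le_mul_of_nonneg_left (pow_le_pow_left₀ hharmn0 hharmn j) hnpos.le
      _ ≤ (n : ℝ) * (1 + Real.log n) ^ (K - 1) := by
          refine mul_le_mul_of_nonneg_left (pow_le_pow_right₀ ?_ hjK) hnpos.le
          linarith
  have hden : ((n : ℝ) / 2) * (Real.log n / (2 * K)) ^ K ≤ (Tc n (K + 1) : ℝ) := by
    calc ((n : ℝ) / 2) * (Real.log n / (2 * K)) ^ K
        ≤ ((n : ℝ) / 2) * (harmonic M : ℝ) ^ K := by
          refine mul_le_mul_of_nonneg_left (pow_le_pow_left₀ ?_ hharmM K) (by positivity)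
          positivity
      _ ≤ (Tc n (K + 1) : ℝ) := Tc_lower n K M hM1 hMn h2Mn
  have hdenpos : (0 : ℝ) < ((n : ℝ) / 2) * (Real.log n / (2 * K)) ^ K := by positivity
  calc (Tc n (j + 1) : ℝ) / (Tc n (K + 1) : ℝ)
      ≤ ((n : ℝ) * (1 + Real.log n) ^ (K - 1))
          / (((n : ℝ) / 2) * (Real.log n / (2 * K)) ^ K) :=
        div_le_div₀ (by positivity) hnum hdenpos hden
    _ = B n := by
        rw [hB]
        rw [div_eq_div_iff (by positivity) (by positivity)]
        ring

lemma Tc_pos (n ℓ : ℕ) (hn : 1 ≤ n) : 0 < Tc n ℓ := by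
  refine Finset.card_pos.2 ⟨fun _ => 1, mem_Tfin.2 ⟨fun l => Finset.mem_Icc.2 ⟨le_refl _, hn⟩, ?_⟩⟩
  simp [hn]

lemma main_nat (K : ℕ) :
    Tendsto (fun n : ℕ =>
      (∑ ℓ ∈ Finset.Icc 1 (K + 1), (Tc n ℓ : ℝ)) / (Tc n (K + 1) : ℝ)) atTop (nhds 1) := by
  have hz : Tendsto (fun n : ℕ =>
      ∑ ℓ ∈ Finset.Icc 1 K, (Tc n ℓ : ℝ) / (Tc n (K + 1) : ℝ)) atTop (nhds 0) := by
    have := tendsto_finset_sum (Finset.Icc 1 K) fun ℓ hℓ => ratio_to_zero K ℓ hℓ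
    simpa using this
  have hsum : Tendsto (fun n : ℕ =>
      1 + ∑ ℓ ∈ Finset.Icc 1 K, (Tc n ℓ : ℝ) / (Tc n (K + 1) : ℝ)) atTop (nhds (1 + 0)) :=
    tendsto_const_nhds.add hz
  rw [add_zero] at hsum
  refine hsum.congr' ?_
  filter_upwards [eventually_ge_atTop 1] with n hn
  have hpos : (0 : ℝ) < (Tc n (K + 1) : ℝ) := by exact_mod_cast Tc_pos n (K + 1) hn
  rw [Finset.sum_div, Finset.sum_Icc_succ_top (by omega : 1 ≤ K + 1), div_self hpos.ne',
    add_comm]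

lemma cond_iff (α σ : ℝ) (hα : 0 < α) {ℓ : ℕ} (f : Fin ℓ → ℕ) (hf : ∀ l, 0 < f l) :
    (α * ∑ l, Real.log (f l) ≤ σ) ↔ (∏ l, (f l : ℝ)) ≤ Real.exp (σ / α) := by
  have hne : ∀ l ∈ Finset.univ, ((f l : ℝ)) ≠ 0 := fun l _ => by
    exact_mod_cast (hf l).ne'
  have hprodpos : (0 : ℝ) < ∏ l, (f l : ℝ) :=
    Finset.prod_pos fun l _ => by exact_mod_cast hf l
  rw [← Real.log_prod hne, mul_comm, ← le_div_iff₀ hα]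
  exact Real.log_le_iff_le_exp hprodpos

lemma Npow_eq (α σ : ℝ) (ℓ : ℕ) : Npow α σ ℓ = Tc ⌊Real.exp (σ / α)⌋₊ ℓ := by
  set n := ⌊Real.exp (σ / α)⌋₊ with hn
  have hXpos : 0 < Real.exp (σ / α) := Real.exp_pos _
  have hiff : ∀ f : Fin ℓ → ℕ,
      ((∀ l, 0 < f l) ∧ (∏ l, (f l : ℝ)) ≤ Real.exp (σ / α)) ↔ f ∈ Tfin n ℓ := by
    intro f
    rw [mem_Tfin]
    constructor
    · rintro ⟨hpos, hle⟩
      have hcast : ((∏ l, f l : ℕ) : ℝ) ≤ Real.exp (σ / α) := by push_cast; exact hle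
      have hprod : ∏ l, f l ≤ n := Nat.le_floor hcast
      refine ⟨fun l => Finset.mem_Icc.2 ⟨hpos l, ?_⟩, hprod⟩
      exact le_trans (Finset.single_le_prod' (fun i _ => hpos i) (Finset.mem_univ l)) hprod
    · rintro ⟨hmem, hle⟩
      refine ⟨fun l => (Finset.mem_Icc.1 (hmem l)).1, ?_⟩
      calc (∏ l, (f l : ℝ)) = ((∏ l, f l : ℕ) : ℝ) := by push_cast; rfl
        _ ≤ (n : ℝ) := by exact_mod_cast hle
        _ ≤ Real.exp (σ / α) := Nat.floor_le hXpos.le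
  rw [Npow, Nat.card_congr (Equiv.subtypeEquivRight hiff), Nat.card_eq_fintype_card,
    Fintype.card_coe]
  rfl

/-- Work of threshold-pruned DFS: for each length `ℓ`, the number of prefixes
`(i_1,...,i_ℓ)` with NLL `α·∑ ln i_j ≤ σ` equals `N(σ, ℓ)`; hence the total number
of explored nodes is `∑_{ℓ=1}^L N(σ, ℓ)`, and this total is asymptotically dominated
by the leaf count: `∑_{ℓ=1}^L N(σ,ℓ) / N(σ,L) → 1` as `σ → ∞` (fixed `L`). -/
theorem pruned_dfs_node_count (α : ℝ) (hα : 0 < α) (L : ℕ) (hL : 1 ≤ L) :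
    (∀ σ : ℝ, ∀ ℓ : ℕ,
      Nat.card {f : Fin ℓ → ℕ // (∀ l, 0 < f l) ∧
        α * ∑ l, Real.log (f l) ≤ σ} = Npow α σ ℓ) ∧
    Tendsto (fun σ : ℝ =>
        (∑ ℓ ∈ Finset.Icc 1 L, (Npow α σ ℓ : ℝ)) / (Npow α σ L : ℝ))
      atTop (nhds 1) := by
  constructor
  · intro σ ℓ
    rw [Npow]
    exact Nat.card_congr (Equiv.subtypeEquivRight fun f =>
      and_congr_right fun hpos => cond_iff α σ hα f hpos)
  · obtain ⟨K, rfl⟩ : ∃ K, L = K + 1 := ⟨L - 1, (Nat.succ_pred_eq_of_pos hL).symm⟩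
    have hcomp : Tendsto (fun σ : ℝ => ⌊Real.exp (σ / α)⌋₊) atTop atTop :=
      tendsto_nat_floor_atTop.comp
        (Real.tendsto_exp_atTop.comp (Tendsto.atTop_div_const hα tendsto_id))
    have hmain := (main_nat K).comp hcomp
    refine hmain.congr fun σ => ?_
    simp only [Function.comp, Npow_eq]
end
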